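/- Let W ∈ ℝ^{L×L} be a doubly stochastic matrix, let N_k ⊆ {1,…,L} with |N_k| = d_k, and let x_k : ℕ → ℝ^n and x̄_{jk} : ℕ → ℝ^n for j ∈ {1,…,L} be sequences satisfying, for all t ≥ 1: (i) x̄_{jk}(t−1) = x_k(t−1) for every j ∈ N_k, and (ii) x̄_{ik}(t) = Σ_{u=1}^{L} w_{iu} · x̂_{uk}(t) for every i, where x̂_{uk}(t) := x_k(t) if u ∈ N_k and x̂_{uk}(t) := x̄_{uk}(t−1) otherwise. Then the average x̄_{av,k}(t) := (1/L)·Σ_{j=1}^{L} x̄_{jk}(t) satisfies x̄_{av,k}(t) = x̄_{av,k}(0) + (d_k/L)·(x_k(t) − x_k(0)) for all t ≥ 0. -/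

import Mathlib

open Matrix Finset

/-- evolution of the network-average estimate in the state-tracking
scheme: `x̄_{av,k}(t) = x̄_{av,k}(0) + (d_k/L)·(x_k(t) − x_k(0))`. -/
theorem state_tracking_average_evolution
    (L n : ℕ) (W : Matrix (Fin L) (Fin L) ℝ)
    (hW_nonneg : ∀ i j, 0 ≤ W i j)
    (hW_row : ∀ i, ∑ j, W i j = 1)
    (hW_col : ∀ j, ∑ i, W i j = 1)
    (Nk : Finset (Fin L)) (xk : ℕ → Fin n → ℝ)
    (xbar : Fin L → ℕ → Fin n → ℝ)
    (hknown : ∀ t : ℕ, 1 ≤ t → ∀ j ∈ Nk, xbar j (t - 1) = xk (t - 1))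
    (hupdate : ∀ t : ℕ, 1 ≤ t → ∀ i, xbar i t =
      ∑ u : Fin L, W i u • (if u ∈ Nk then xk t else xbar u (t - 1))) :
    ∀ t : ℕ, (1 / (L : ℝ)) • ∑ j : Fin L, xbar j t
      = (1 / (L : ℝ)) • ∑ j : Fin L, xbar j 0
        + ((Nk.card : ℝ) / (L : ℝ)) • (xk t - xk 0) := by
  intro t
  induction t with
  | zero => simp
  | succ t ih =>
    have hk : ∀ j ∈ Nk, xbar j t = xk t := by
      intro j hj; simpa using hknown (t + 1) (by omega) j hj
    have hsum : ∑ j : Fin L, xbar j (t + 1)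
        = (∑ j : Fin L, xbar j t)
          + (Nk.card : ℝ) • (xk (t + 1) - xk t) := by
      have h1 : ∀ i : Fin L, xbar i (t + 1)
          = ∑ u : Fin L, W i u • (if u ∈ Nk then xk (t + 1) else xbar u t) := by
        intro i; simpa using hupdate (t + 1) (by omega) i
      rw [Finset.sum_congr rfl fun i _ => h1 i, Finset.sum_comm]
      have h2 : ∀ u : Fin L, ∑ i : Fin L,
          W i u • (if u ∈ Nk then xk (t + 1) else xbar u t)
          = (if u ∈ Nk then xk (t + 1) else xbar u t) := by
        intro u; rw [← Finset.sum_smul, hW_col u, one_smul]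
      rw [Finset.sum_congr rfl fun u _ => h2 u]
      have h4 : ∀ u : Fin L, (if u ∈ Nk then xk (t + 1) else xbar u t)
          = xbar u t + (if u ∈ Nk then xk (t + 1) - xk t else 0) := by
        intro u
        by_cases hu : u ∈ Nk
        · simp [hu, hk u hu]
        · simp [hu]
      rw [Finset.sum_congr rfl fun u _ => h4 u, Finset.sum_add_distrib,
        Finset.sum_ite_mem, Finset.univ_inter, Finset.sum_const]
      simp [← Nat.cast_smul_eq_nsmul ℝ]
    rw [hsum, smul_add, ih]
    match_scalars <;> ring
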